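/- For every μ with 2/e < μ ≤ 2, there exists a measurable function W : ℝ × ℝ → ℝ satisfying the minimal constraints, with purity equal to μ, and with Wigner entropy S[W] < 1 + ln π. Consequently, under the minimal constraints alone, no purity threshold μ_⋆ > 2/e can make the implication 'μ ≤ μ_⋆ ⇒ S[W] ≥ 1 + ln π' valid. -/

import Mathlib

open Real MeasureTheory

lemma rect_integral (L c : ℝ) (hL : 0 ≤ L) :
    ∫ z : ℝ × ℝ, (Set.Icc (0:ℝ) 1 ×ˢ Set.Icc (0:ℝ) L).indicator (fun _ => c) z = L * c := by
  rw [MeasureTheory.integral_indicator_const c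
    ((measurableSet_Icc).prod (measurableSet_Icc))]
  have : volume (Set.Icc (0:ℝ) 1 ×ˢ Set.Icc (0:ℝ) L)
      = ENNReal.ofReal 1 * ENNReal.ofReal L := by
    rw [Measure.volume_eq_prod, Measure.prod_prod, Real.volume_Icc, Real.volume_Icc]
    norm_num
  rw [measureReal_def, this, ENNReal.toReal_mul, ENNReal.toReal_ofReal (by norm_num), ENNReal.toReal_ofReal hL]
  simp [smul_eq_mul]

lemma flat_witness (μ : ℝ) (h1 : 2 / Real.exp 1 < μ) (h2 : μ ≤ 2) :
    ∃ W : ℝ × ℝ → ℝ, Measurable W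
      ∧ (∀ z, 0 ≤ W z)
      ∧ (∫ z, W z = 1)
      ∧ (∀ z, Real.pi * W z ≤ 1)
      ∧ 2 * Real.pi * (∫ z, (W z) ^ 2) = μ
      ∧ (-∫ z, W z * Real.log (W z)) < 1 + Real.log Real.pi := by
  have hμpos : 0 < μ := lt_trans (by positivity) h1
  have hπ : (0:ℝ) < Real.pi := Real.pi_pos
  set c : ℝ := μ / (2 * Real.pi) with hc
  set L : ℝ := 2 * Real.pi / μ with hLdef
  have hcpos : 0 < c := by positivity
  have hLpos : 0 < L := by positivity
  have hLc : L * c = 1 := by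
    rw [hc, hLdef]; field_simp
  set s : Set (ℝ × ℝ) := Set.Icc (0:ℝ) 1 ×ˢ Set.Icc (0:ℝ) L with hs
  have hsm : MeasurableSet s := (measurableSet_Icc).prod (measurableSet_Icc)
  refine ⟨s.indicator (fun _ => c), (measurable_const).indicator hsm, ?_, ?_, ?_, ?_, ?_⟩
  · intro z; exact Set.indicator_nonneg (fun _ _ => le_of_lt hcpos) z
  · rw [rect_integral L c hLpos.le, hLc]
  · intro z
    by_cases hz : z ∈ s
    · simp only [Set.indicator_of_mem hz]
      have : c ≤ 1 / Real.pi := by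
        rw [hc, div_le_div_iff₀ (by positivity) hπ]
        nlinarith
      calc Real.pi * c ≤ Real.pi * (1 / Real.pi) := by nlinarith
        _ = 1 := by field_simp
    · simp [Set.indicator_of_notMem hz, hπ.le]
  · have heq : ∀ z, (s.indicator (fun _ => c) z) ^ 2 = s.indicator (fun _ => c ^ 2) z := by
      intro z; by_cases hz : z ∈ s <;> simp [hz]
    rw [show (∫ z, (s.indicator (fun _ => c) z) ^ 2) = ∫ z, s.indicator (fun _ => c ^ 2) z from
      by exact integral_congr_ae (Filter.Eventually.of_forall heq)]
    rw [rect_integral L (c ^ 2) hLpos.le]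
    have : L * c ^ 2 = c := by rw [pow_two, ← mul_assoc, hLc, one_mul]
    rw [this, hc]
    field_simp
  · have heq : ∀ z, s.indicator (fun _ => c) z * Real.log (s.indicator (fun _ => c) z)
        = s.indicator (fun _ => c * Real.log c) z := by
      intro z; by_cases hz : z ∈ s <;> simp [hz]
    rw [show (∫ z, s.indicator (fun _ => c) z * Real.log (s.indicator (fun _ => c) z))
        = ∫ z, s.indicator (fun _ => c * Real.log c) z from
      integral_congr_ae (Filter.Eventually.of_forall heq)]
    rw [rect_integral L (c * Real.log c) hLpos.le, ← mul_assoc, hLc, one_mul]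
    -- need : -log c < 1 + log π, i.e. log (μ/(2π)) > -(1 + log π)
    have hlogc : Real.log c = Real.log μ - (Real.log 2 + Real.log Real.pi) := by
      rw [hc, Real.log_div (ne_of_gt hμpos) (by positivity),
        Real.log_mul (by norm_num) (ne_of_gt hπ)]
    have hlogμ : Real.log 2 - 1 < Real.log μ := by
      have := Real.log_lt_log (by positivity) h1
      rwa [Real.log_div (by norm_num) (Real.exp_ne_zero 1), Real.log_exp] at this
    rw [hlogc]; linarith

theorem purity_threshold_sharpness :
    (∀ μ : ℝ, 2 / Real.exp 1 < μ → μ ≤ 2 →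
      ∃ W : ℝ × ℝ → ℝ, Measurable W
        ∧ (∀ z, 0 ≤ W z)
        ∧ (∫ z, W z = 1)
        ∧ (∀ z, Real.pi * W z ≤ 1)
        ∧ 2 * Real.pi * (∫ z, (W z) ^ 2) = μ
        ∧ (-∫ z, W z * Real.log (W z)) < 1 + Real.log Real.pi)
    ∧ ∀ μstar : ℝ, 2 / Real.exp 1 < μstar →
        ¬ (∀ W : ℝ × ℝ → ℝ, Measurable W →
            (∀ z, 0 ≤ W z) →
            (∫ z, W z = 1) →
            (∀ z, Real.pi * W z ≤ 1) →
            2 * Real.pi * (∫ z, (W z) ^ 2) ≤ μstar →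
            1 + Real.log Real.pi ≤ -∫ z, W z * Real.log (W z)) := by
  constructor
  · exact flat_witness
  · intro μstar hμstar hcontra
    have he : (2:ℝ) ≤ Real.exp 1 := by
      have := Real.add_one_le_exp 1; linarith
    have h2e : 2 / Real.exp 1 < 2 := by
      rw [div_lt_iff₀ (by positivity)]; nlinarith
    obtain ⟨W, hm, hpos, hint, hbd, hpur, hent⟩ :=
      flat_witness (min μstar 2) (lt_min hμstar h2e) (min_le_right _ _)
    have := hcontra W hm hpos hint hbd (by rw [hpur]; exact min_le_left _ _)
    linarith
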